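/- Let f(x,u) = Z(x,u) a_gt for some a_gt ∈ ℝ^{nℓ}, and let data samples (x̃_i^+, x̃_i, ũ_i), i = 1,…,D, satisfy x̃_i^+ = f(x̃_i, ũ_i) + d̃_i where each noise vector satisfies the quadratic bound δ(d̃_i) ≤ 0 with δ(d) = [d;1]^T [[Δ_1, Δ_2],[Δ_2^T, Δ_3]] [d;1], Δ_1 ∈ ℝ^{n×n} positive definite, Δ_2 ∈ ℝ^{n×1}, Δ_3 ≤ 0 scalar. Let P = {(x,u) : p_j(x,u) ≤ 0, j = 1,…,c}, let s ∈ ℝ[x,u], write Z̃_i = Z(x̃_i, ũ_i), and define the data matrices Q_i ∈ ℝ^{(nℓ+1)×(nℓ+1)} by Q_i = [[Z̃_i^T Δ_1 Z̃_i, −Z̃_i^T(Δ_1 x̃_i^+ + Δ_2)], [−(x̃_i^{+T} Δ_1 + Δ_2^T) Z̃_i, [x̃_i^+;1]^T [[Δ_1,Δ_2],[Δ_2^T,Δ_3]] [x̃_i^+;1]]]. Suppose there exist a positive semidefinite matrix P ∈ ℝ^{n×n}, SOS polynomials t_i ∈ SOS[x,u] (i = 1,…,D), and SOS matrices S_j ∈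 SOS[x,u]^{(nℓ+1)×(nℓ+1)} (j = 1,…,c) such that Ψ(x,u) = Σ_{j=1}^{c} p_j(x,u) S_j(x,u) + Σ_{i=1}^{D} Q_i t_i(x,u) + [[−Z(x,u)^T P Z(x,u), 0],[0, s(x,u) + x^T P x]] is an SOS matrix in (x,u). Then every a ∈ ℝ^{nℓ} with [a;1]^T Q_i [a;1] ≤ 0 for all i — in particular a_gt — satisfies (Z(x,u)a)^T P (Z(x,u)a) − x^T P x ≤ s(x,u) for all (x,u) ∈ P; hence f is dissipative on P with respect to s with storage function λ(x) = x^T P x. -/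

import Mathlib

open Matrix

/-- A polynomial is SOS if it is a finite sum of squares of real polynomials. -/
def IsSOSPoly {σ : Type*} (p : MvPolynomial σ ℝ) : Prop :=
  ∃ (k : ℕ) (q : Fin k → MvPolynomial σ ℝ), p = ∑ j, (q j) ^ 2

/-- A polynomial matrix `P ∈ ℝ[x]^{r×r}` is an SOS matrix if `P = Qᵀ * Q`
for some polynomial matrix `Q ∈ ℝ[x]^{s×r}`. -/
def IsSOSMatrix {σ : Type*} {ι : Type*} (P : Matrix ι ι (MvPolynomial σ ℝ)) : Prop :=
  ∃ (s : ℕ) (Q : Matrix (Fin s) ι (MvPolynomial σ ℝ)), P = Qᵀ * Q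

/-- The matrix `Z(x,u) = I_n ⊗ z(x,u)ᵀ ∈ ℝ^{n×nℓ}`, evaluated at `(x,u)`, with columns
indexed by pairs `(k,j) ∈ Fin n × Fin ℓ` (so `Z(x,u) a = A z(x,u)` for `a (k,j) = A k j`). -/
noncomputable def Zm {n m ℓ : ℕ} (z : Fin ℓ → MvPolynomial (Fin (n + m)) ℝ)
    (x : Fin n → ℝ) (u : Fin m → ℝ) : Matrix (Fin n) (Fin n × Fin ℓ) ℝ :=
  Matrix.of fun k kj =>
    if kj.1 = k then MvPolynomial.eval (Fin.append x u) (z kj.2) else 0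

/-- The data-dependent matrices `Q_i` of Corollary 1 (for quadratically bounded noise
`δ(d) = [d;1]ᵀ [[Δ₁,Δ₂],[Δ₂ᵀ,Δ₃]] [d;1]`). -/
noncomputable def Qmat {n m ℓ : ℕ} (z : Fin ℓ → MvPolynomial (Fin (n + m)) ℝ)
    (Δ1 : Matrix (Fin n) (Fin n) ℝ) (Δ2 : Fin n → ℝ) (Δ3 : ℝ)
    (xpi xdi : Fin n → ℝ) (udi : Fin m → ℝ) :
    Matrix ((Fin n × Fin ℓ) ⊕ Unit) ((Fin n × Fin ℓ) ⊕ Unit) ℝ :=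
  Matrix.fromBlocks
    ((Zm z xdi udi)ᵀ * Δ1 * Zm z xdi udi)
    (Matrix.of fun kj _ => -((Zm z xdi udi)ᵀ.mulVec (Δ1.mulVec xpi + Δ2) kj))
    (Matrix.of fun _ kj => -((Zm z xdi udi)ᵀ.mulVec (Δ1.mulVec xpi + Δ2) kj))
    (Matrix.of fun _ _ => xpi ⬝ᵥ Δ1.mulVec xpi + 2 * (Δ2 ⬝ᵥ xpi) + Δ3)


section Aux
open Matrix

private lemma eval_sos_nonneg' {σ : Type*} {p : MvPolynomial σ ℝ} (h : IsSOSPoly p)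
    (x : σ → ℝ) : 0 ≤ MvPolynomial.eval x p := by
  obtain ⟨k, q, rfl⟩ := h
  simp only [map_sum, map_pow]
  exact Finset.sum_nonneg fun j _ => sq_nonneg _

private lemma qf_sum' {ι κ : Type*} [Fintype ι] (s : Finset κ) (M : κ → Matrix ι ι ℝ)
    (v : ι → ℝ) :
    v ⬝ᵥ (∑ k ∈ s, M k).mulVec v = ∑ k ∈ s, v ⬝ᵥ (M k).mulVec v := by
  classical
  induction s using Finset.induction with
  | empty => simp [Matrix.mulVec, dotProduct]
  | insert _ _ h ih => simp [Finset.sum_insert h, Matrix.add_mulVec, dotProduct_add, ih]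

private lemma dp_transpose' {ι κ : Type*} [Fintype ι] [Fintype κ] (Z : Matrix κ ι ℝ)
    (a : ι → ℝ) (b : κ → ℝ) : a ⬝ᵥ Zᵀ.mulVec b = Z.mulVec a ⬝ᵥ b := by
  rw [Matrix.dotProduct_mulVec, Matrix.vecMul_transpose]

private lemma dp_sandwich {ι κ : Type*} [Fintype ι] [Fintype κ] (Z : Matrix κ ι ℝ)
    (P : Matrix κ κ ℝ) (a b : ι → ℝ) :
    a ⬝ᵥ (Zᵀ * P * Z).mulVec b = (Z.mulVec a) ⬝ᵥ P.mulVec (Z.mulVec b) := by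
  rw [Matrix.mul_assoc, ← Matrix.mulVec_mulVec, ← Matrix.mulVec_mulVec, dp_transpose']

private lemma quad_blocks' {ι : Type*} [Fintype ι] (A : Matrix ι ι ℝ) (B : Matrix ι Unit ℝ)
    (C : Matrix Unit ι ℝ) (Dm : Matrix Unit Unit ℝ) (a : ι → ℝ) :
    Sum.elim a (fun _ => (1:ℝ)) ⬝ᵥ
      (Matrix.fromBlocks A B C Dm).mulVec (Sum.elim a fun _ => 1)
      = a ⬝ᵥ A.mulVec a + a ⬝ᵥ (fun i => B i ()) + (fun i => C () i) ⬝ᵥ a + Dm () () := by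
  rw [Matrix.fromBlocks_mulVec, sumElim_dotProduct_sumElim]
  simp [Matrix.mulVec, dotProduct, dotProduct_add, mul_add, add_mul]
  rw [Finset.sum_add_distrib]; ring

private lemma sos_matrix_quad_nonneg' {σ ι : Type*} [Fintype ι]
    {M : Matrix ι ι (MvPolynomial σ ℝ)} (h : IsSOSMatrix M)
    (x : σ → ℝ) (v : ι → ℝ) :
    0 ≤ v ⬝ᵥ (M.map (MvPolynomial.eval x)).mulVec v := by
  obtain ⟨s, Q, rfl⟩ := h
  have hmap : (Qᵀ * Q).map (MvPolynomial.eval x)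
      = (Q.map (MvPolynomial.eval x))ᵀ * (Q.map (MvPolynomial.eval x)) := by
    rw [Matrix.map_mul, Matrix.transpose_map]
  rw [hmap, ← Matrix.mulVec_mulVec, dp_transpose']
  exact Finset.sum_nonneg fun i _ => mul_self_nonneg _

private lemma symm_dp' {ι : Type*} [Fintype ι] {A : Matrix ι ι ℝ} (h : Aᵀ = A)
    (x y : ι → ℝ) : x ⬝ᵥ A.mulVec y = y ⬝ᵥ A.mulVec x := by
  rw [Matrix.dotProduct_mulVec, ← Matrix.mulVec_transpose, h, dotProduct_comm]

end Aux

/-- Corollary 1: data-driven dissipativity verification for quadratically bounded noise.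
If `Ψ(x,u) = ∑ⱼ pⱼ(x,u) Sⱼ(x,u) + ∑ᵢ Qᵢ tᵢ(x,u) +
[[−Z(x,u)ᵀ P Z(x,u), 0],[0, s(x,u) + xᵀPx]]` is an SOS matrix for some PSD `P`, SOS
polynomials `tᵢ` and SOS matrices `Sⱼ`, then every coefficient vector `a` with
`[a;1]ᵀ Qᵢ [a;1] ≤ 0` for all `i` — in particular the ground-truth one — satisfies
`(Z(x,u)a)ᵀ P (Z(x,u)a) − xᵀPx ≤ s(x,u)` on the constraint set; hence `f` is dissipative
w.r.t. `s` with storage function `λ(x) = xᵀPx`. -/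
theorem stmt4 {n m ℓ D c : ℕ}
    (z : Fin ℓ → MvPolynomial (Fin (n + m)) ℝ)
    (Δ1 : Matrix (Fin n) (Fin n) ℝ) (Δ2 : Fin n → ℝ) (Δ3 : ℝ)
    (hΔ1 : Δ1.PosDef) (hΔ3 : Δ3 ≤ 0)
    (p : Fin c → MvPolynomial (Fin (n + m)) ℝ)
    (s : MvPolynomial (Fin (n + m)) ℝ)
    (xp xd : Fin D → Fin n → ℝ) (ud : Fin D → Fin m → ℝ)
    (agt : Fin n × Fin ℓ → ℝ) (dn : Fin D → Fin n → ℝ)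
    (f : (Fin n → ℝ) → (Fin m → ℝ) → (Fin n → ℝ))
    (hf : ∀ x u, f x u = (Zm z x u).mulVec agt)
    (hdata : ∀ i, xp i = f (xd i) (ud i) + dn i)
    (hnoise : ∀ i, dn i ⬝ᵥ Δ1.mulVec (dn i) + 2 * (Δ2 ⬝ᵥ dn i) + Δ3 ≤ 0)
    (P : Matrix (Fin n) (Fin n) ℝ) (hP : P.PosSemidef)
    (t : Fin D → MvPolynomial (Fin (n + m)) ℝ) (ht : ∀ i, IsSOSPoly (t i))
    (S : Fin c → Matrix ((Fin n × Fin ℓ) ⊕ Unit) ((Fin n × Fin ℓ) ⊕ Unit)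
        (MvPolynomial (Fin (n + m)) ℝ))
    (hS : ∀ j, IsSOSMatrix (S j))
    (Ψ : Matrix ((Fin n × Fin ℓ) ⊕ Unit) ((Fin n × Fin ℓ) ⊕ Unit)
        (MvPolynomial (Fin (n + m)) ℝ))
    (hΨsos : IsSOSMatrix Ψ)
    (hΨ : ∀ (x : Fin n → ℝ) (u : Fin m → ℝ),
      Ψ.map (MvPolynomial.eval (Fin.append x u)) =
        ∑ j, MvPolynomial.eval (Fin.append x u) (p j) •
            (S j).map (MvPolynomial.eval (Fin.append x u))
        + ∑ i, MvPolynomial.eval (Fin.append x u) (t i) •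
            Qmat z Δ1 Δ2 Δ3 (xp i) (xd i) (ud i)
        + Matrix.fromBlocks (-((Zm z x u)ᵀ * P * Zm z x u)) 0 0
            (Matrix.of fun _ _ =>
              MvPolynomial.eval (Fin.append x u) s + x ⬝ᵥ P.mulVec x)) :
    ((∀ a : Fin n × Fin ℓ → ℝ,
        (∀ i, Sum.elim a (fun _ => (1 : ℝ)) ⬝ᵥ
            (Qmat z Δ1 Δ2 Δ3 (xp i) (xd i) (ud i)).mulVec
              (Sum.elim a fun _ => (1 : ℝ)) ≤ 0) →
        ∀ (x : Fin n → ℝ) (u : Fin m → ℝ),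
          (∀ j, MvPolynomial.eval (Fin.append x u) (p j) ≤ 0) →
          (Zm z x u).mulVec a ⬝ᵥ P.mulVec ((Zm z x u).mulVec a) - x ⬝ᵥ P.mulVec x ≤
            MvPolynomial.eval (Fin.append x u) s) ∧
      (∀ (x : Fin n → ℝ) (u : Fin m → ℝ),
        (∀ j, MvPolynomial.eval (Fin.append x u) (p j) ≤ 0) →
        f x u ⬝ᵥ P.mulVec (f x u) - x ⬝ᵥ P.mulVec x ≤
          MvPolynomial.eval (Fin.append x u) s)) := by

  -- symmetry of Δ1
  have hΔ1sym : Δ1ᵀ = Δ1 := by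
    have h := hΔ1.1
    ext i j
    have := congrFun (congrFun h i) j
    simpa using this
  have H1 : (∀ a : Fin n × Fin ℓ → ℝ,
        (∀ i, Sum.elim a (fun _ => (1 : ℝ)) ⬝ᵥ
            (Qmat z Δ1 Δ2 Δ3 (xp i) (xd i) (ud i)).mulVec
              (Sum.elim a fun _ => (1 : ℝ)) ≤ 0) →
        ∀ (x : Fin n → ℝ) (u : Fin m → ℝ),
          (∀ j, MvPolynomial.eval (Fin.append x u) (p j) ≤ 0) →
          (Zm z x u).mulVec a ⬝ᵥ P.mulVec ((Zm z x u).mulVec a) - x ⬝ᵥ P.mulVec x ≤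
            MvPolynomial.eval (Fin.append x u) s) := by
    intro a ha x u hpc
    set ev := MvPolynomial.eval (Fin.append x u) with hev
    set v : (Fin n × Fin ℓ) ⊕ Unit → ℝ := Sum.elim a fun _ => 1 with hv
    have h0 := sos_matrix_quad_nonneg' hΨsos (Fin.append x u) v
    rw [hΨ x u, Matrix.add_mulVec, Matrix.add_mulVec, dotProduct_add, dotProduct_add,
      qf_sum', qf_sum'] at h0
    simp only [Matrix.smul_mulVec, dotProduct_smul, smul_eq_mul] at h0
    have hterm1 : ∑ j, ev (p j) * (v ⬝ᵥ ((S j).map ev).mulVec v) ≤ 0 :=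
      Finset.sum_nonpos fun j _ =>
        mul_nonpos_iff.mpr (Or.inr ⟨hpc j, sos_matrix_quad_nonneg' (hS j) _ _⟩)
    have hterm2 : ∑ i, ev (t i) *
        (v ⬝ᵥ (Qmat z Δ1 Δ2 Δ3 (xp i) (xd i) (ud i)).mulVec v) ≤ 0 :=
      Finset.sum_nonpos fun i _ =>
        mul_nonpos_iff.mpr (Or.inl ⟨eval_sos_nonneg' (ht i) _, ha i⟩)
    have hblock : v ⬝ᵥ (Matrix.fromBlocks (-((Zm z x u)ᵀ * P * Zm z x u)) 0 0
        (Matrix.of fun _ _ => ev s + x ⬝ᵥ P.mulVec x)).mulVec v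
        = -((Zm z x u).mulVec a ⬝ᵥ P.mulVec ((Zm z x u).mulVec a))
          + (ev s + x ⬝ᵥ P.mulVec x) := by
      rw [hv, quad_blocks', Matrix.neg_mulVec, dotProduct_neg, dp_sandwich]
      simp [dotProduct]
    rw [hblock] at h0
    linarith
  refine ⟨H1, ?_⟩
  intro x u hpc
  rw [hf]
  refine H1 agt (fun i => ?_) x u hpc
  set Zt := Zm z (xd i) (ud i) with hZt
  set w := Zt.mulVec agt with hw
  have hx : xp i = w + dn i := by rw [hdata i, hf]
  have hsym : w ⬝ᵥ Δ1.mulVec (dn i) = dn i ⬝ᵥ Δ1.mulVec w := symm_dp' hΔ1sym _ _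
  have hcomm : w ⬝ᵥ Δ2 = Δ2 ⬝ᵥ w := dotProduct_comm _ _
  have hQ : Sum.elim agt (fun _ => (1:ℝ)) ⬝ᵥ
      (Qmat z Δ1 Δ2 Δ3 (xp i) (xd i) (ud i)).mulVec (Sum.elim agt fun _ => 1)
      = w ⬝ᵥ (Δ1.mulVec w) - 2 * (w ⬝ᵥ (Δ1.mulVec (xp i) + Δ2))
        + (xp i ⬝ᵥ Δ1.mulVec (xp i) + 2 * (Δ2 ⬝ᵥ xp i) + Δ3) := by
    rw [Qmat, quad_blocks']
    have hB : agt ⬝ᵥ (fun kj =>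
        (Matrix.of fun kj (_ : Unit) => -((Ztᵀ.mulVec (Δ1.mulVec (xp i) + Δ2)) kj)) kj ())
        = -(w ⬝ᵥ (Δ1.mulVec (xp i) + Δ2)) := by
      simp only [Matrix.of_apply]
      rw [show (fun kj => -((Ztᵀ.mulVec (Δ1.mulVec (xp i) + Δ2)) kj))
          = -(Ztᵀ.mulVec (Δ1.mulVec (xp i) + Δ2)) from rfl,
        dotProduct_neg, dp_transpose', ← hw]
    have hC : (fun kj =>
        (Matrix.of fun (_ : Unit) kj => -((Ztᵀ.mulVec (Δ1.mulVec (xp i) + Δ2)) kj)) () kj)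
        ⬝ᵥ agt = -(w ⬝ᵥ (Δ1.mulVec (xp i) + Δ2)) := by
      simp only [Matrix.of_apply]
      rw [show (fun kj => -((Ztᵀ.mulVec (Δ1.mulVec (xp i) + Δ2)) kj))
          = -(Ztᵀ.mulVec (Δ1.mulVec (xp i) + Δ2)) from rfl,
        neg_dotProduct, dotProduct_comm, dp_transpose', ← hw]
    rw [hB, hC, dp_sandwich, ← hw, Matrix.of_apply]
    ring
  rw [hQ]
  have h3 : xp i ⬝ᵥ Δ1.mulVec (xp i)
      = w ⬝ᵥ Δ1.mulVec w + 2 * (dn i ⬝ᵥ Δ1.mulVec w) + dn i ⬝ᵥ Δ1.mulVec (dn i) := by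
    rw [hx, Matrix.mulVec_add, dotProduct_add, add_dotProduct, add_dotProduct]
    linarith
  have h4 : w ⬝ᵥ (Δ1.mulVec (xp i) + Δ2)
      = w ⬝ᵥ Δ1.mulVec w + dn i ⬝ᵥ Δ1.mulVec w + Δ2 ⬝ᵥ w := by
    rw [hx, Matrix.mulVec_add, dotProduct_add, dotProduct_add]
    linarith
  have h5 : Δ2 ⬝ᵥ xp i = Δ2 ⬝ᵥ w + Δ2 ⬝ᵥ dn i := by rw [hx, dotProduct_add]
  have h6 := hnoise i
  linarith
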